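/- arXiv:2107.11459 — 2 statements merged into one kernel-verified Lean document; each statement's English description precedes it below -/
import Mathlib

section
/- Under the base setup, suppose E[Y·1{A ≥ v}] = 0 (the threshold v has zero risk). Then Q₀·1{A ≥ v} = 0 a.s., Q₀ᵥ = 0 a.s., Ψ₀ = 0, and the efficient influence function vanishes identically: D₀ = 0 almost surely. -/
open MeasureTheory ProbabilityTheory

/-- at a threshold of zero risk (`E[Y·1{A ≥ v}] = 0`), the nuisances, the
estimand and the efficient influence function all vanish. -/
theorem stmt15
    {Ω 𝒲 : Type*} [mΩ : MeasurableSpace Ω] [MeasurableSpace 𝒲]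
    (μ : Measure Ω) [IsProbabilityMeasure μ]
    (W : Ω → 𝒲) (A Δ Y : Ω → ℝ)
    (hWmeas : Measurable W) (hAmeas : Measurable A)
    (hΔmeas : Measurable Δ) (hYmeas : Measurable Y)
    (hΔ01 : ∀ ω, Δ ω = 0 ∨ Δ ω = 1) (hY01 : ∀ ω, Y ω ∈ Set.Icc (0 : ℝ) 1)
    (v δ : ℝ) (hδ0 : 0 < δ) (hδ1 : δ < 1)
    (m0 m1 m2 : MeasurableSpace Ω)
    (hm0 : m0 = MeasurableSpace.comap W inferInstance)
    (hm1 : m1 = MeasurableSpace.comap (fun ω => (A ω, W ω)) inferInstance)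
    (hm2 : m2 = MeasurableSpace.comap (fun ω => (A ω, W ω, Δ ω)) inferInstance)
    (G₀ g₀ Q₀ Q₀ᵥ : Ω → ℝ) (Ψ₀ : ℝ)
    (hG₀ : G₀ = μ[Δ | m1])
    (hg₀ : g₀ = μ[fun ω => if v ≤ A ω then (1 : ℝ) else 0 | m0])
    (hQ₀ : Q₀ = fun ω => ((μ[fun ω' => Y ω' * Δ ω' | m1]) ω) / G₀ ω)
    (hQ₀ᵥ : Q₀ᵥ = fun ω =>
      ((μ[fun ω' => Q₀ ω' * (if v ≤ A ω' then (1 : ℝ) else 0) | m0]) ω) / g₀ ω)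
    (hΨ₀ : Ψ₀ = ∫ ω, Q₀ᵥ ω ∂μ)
    (hG₀pos : ∀ᵐ ω ∂μ, δ ≤ G₀ ω)
    (hg₀pos : ∀ᵐ ω ∂μ, δ ≤ g₀ ω)
    (D₀ : Ω → ℝ)
    (hD₀ : D₀ = fun ω =>
      ((if v ≤ A ω then (1 : ℝ) else 0) / g₀ ω) * (Δ ω / G₀ ω) * (Y ω - Q₀ ω)
      + ((if v ≤ A ω then (1 : ℝ) else 0) / g₀ ω) * (Q₀ ω - Q₀ᵥ ω) + (Q₀ᵥ ω - Ψ₀))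
    (hzero : ∫ ω, Y ω * (if v ≤ A ω then (1 : ℝ) else 0) ∂μ = 0) :
    ((fun ω => Q₀ ω * (if v ≤ A ω then (1 : ℝ) else 0)) =ᵐ[μ] (0 : Ω → ℝ)) ∧
    (Q₀ᵥ =ᵐ[μ] (0 : Ω → ℝ)) ∧ Ψ₀ = 0 ∧ (D₀ =ᵐ[μ] (0 : Ω → ℝ)) := by
  set s : Set Ω := {ω | v ≤ A ω} with hs_def
  have hsM : MeasurableSet[mΩ] s := measurableSet_le measurable_const hAmeas
  have hindM : Measurable[mΩ] (fun ω => if v ≤ A ω then (1 : ℝ) else 0) :=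
    Measurable.ite hsM measurable_const measurable_const
  -- Step 1: Y · 1{A ≥ v} = 0 a.e.
  have hYint : Integrable (fun ω => Y ω * (if v ≤ A ω then (1 : ℝ) else 0)) μ := by
    refine (integrable_const (1 : ℝ)).mono' (hYmeas.mul hindM).aestronglyMeasurable
      (ae_of_all _ fun ω => ?_)
    have h := hY01 ω
    rw [Real.norm_eq_abs, abs_mul]
    split_ifs with h'
    · simpa [abs_of_nonneg h.1] using h.2
    · simp
  have hYnn : 0 ≤ᵐ[μ] fun ω => Y ω * (if v ≤ A ω then (1 : ℝ) else 0) := by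
    refine ae_of_all _ fun ω => ?_
    have h := hY01 ω
    exact mul_nonneg h.1 (by split_ifs <;> norm_num)
  have hY0 : (fun ω => Y ω * (if v ≤ A ω then (1 : ℝ) else 0)) =ᵐ[μ] 0 :=
    (integral_eq_zero_iff_of_nonneg_ae hYnn hYint).mp hzero
  -- Step 2: indicator of YΔ is a.e. 0
  have hYΔ0 : s.indicator (fun ω => Y ω * Δ ω) =ᵐ[μ] 0 := by
    filter_upwards [hY0] with ω h0
    simp only [Set.indicator_apply, hs_def, Set.mem_setOf_eq]
    split_ifs with h'
    · simp only [if_pos h', mul_one] at h0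
      simp [h0]
    · rfl
  have hYΔint : Integrable (fun ω => Y ω * Δ ω) μ := by
    refine (integrable_const (1 : ℝ)).mono' (hYmeas.mul hΔmeas).aestronglyMeasurable
      (ae_of_all _ fun ω => ?_)
    have h := hY01 ω
    rw [Real.norm_eq_abs, abs_mul]
    rcases hΔ01 ω with h' | h' <;> rw [h'] <;> simp [abs_of_nonneg h.1, h.2]
  have hsM1 : MeasurableSet[m1] s := by
    rw [hm1]
    exact ⟨{p : ℝ × 𝒲 | v ≤ p.1}, measurableSet_le measurable_const measurable_fst, rfl⟩
  -- Step 3: indicator of the conditional expectation is a.e. 0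
  have hcond0 : s.indicator (μ[fun ω' => Y ω' * Δ ω' | m1]) =ᵐ[μ] 0 := by
    refine ((condExp_indicator hYΔint hsM1).symm.trans ?_)
    exact (condExp_congr_ae hYΔ0).trans (by rw [condExp_zero])
  -- claim 1
  have claim1 : (fun ω => Q₀ ω * (if v ≤ A ω then (1 : ℝ) else 0)) =ᵐ[μ] (0 : Ω → ℝ) := by
    filter_upwards [hcond0] with ω h0
    simp only [Set.indicator_apply, hs_def, Set.mem_setOf_eq, Pi.zero_apply] at h0 ⊢
    rw [hQ₀]
    split_ifs with h'
    · simp only [if_pos h'] at h0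
      simp [h0]
    · simp
  -- claim 2
  have claim2 : Q₀ᵥ =ᵐ[μ] (0 : Ω → ℝ) := by
    have hc : μ[fun ω' => Q₀ ω' * (if v ≤ A ω' then (1 : ℝ) else 0) | m0] =ᵐ[μ] 0 :=
      (condExp_congr_ae claim1).trans (by rw [condExp_zero])
    filter_upwards [hc] with ω h0
    rw [hQ₀ᵥ]
    simp only [Pi.zero_apply] at h0 ⊢
    rw [h0, zero_div]
  -- claim 3
  have claim3 : Ψ₀ = 0 := by
    rw [hΨ₀, integral_congr_ae claim2]; simp
  refine ⟨claim1, claim2, claim3, ?_⟩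
  -- claim 4
  filter_upwards [claim1, claim2, hY0] with ω h1 h2 h3
  rw [hD₀]
  simp only [Pi.zero_apply] at h1 h2 h3 ⊢
  rw [claim3, h2]
  by_cases h : v ≤ A ω
  · simp only [if_pos h, mul_one] at h1 h3
    rw [h1, h3]
    simp
  · simp [h]
end

section
/- Under the base setup, assume additionally that σ(Δ) is conditionally independent of σ(A, Y) given 𝒢₀ (quasi-informative missingness), and write Ḡ₀ := E[Δ ∣ 𝒢₀] (so Ḡ₀ ≥ δ a.s.). Then the threshold-response reduces to the binary-treatment-specific mean form: Ψ₀ = E[ E[Y·Δ·1{A ≥ v} ∣ 𝒢₀] / (Ḡ₀·g₀) ]. -/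
open MeasureTheory ProbabilityTheory

lemma comap_pair {Ω α β : Type*} [mα : MeasurableSpace α] [mβ : MeasurableSpace β]
    (f : Ω → α) (g : Ω → β) :
    MeasurableSpace.comap (fun ω => (f ω, g ω)) inferInstance
      = MeasurableSpace.comap f inferInstance ⊔ MeasurableSpace.comap g inferInstance := by
  show MeasurableSpace.comap _ (mα.comap Prod.fst ⊔ mβ.comap Prod.snd) = _
  rw [MeasurableSpace.comap_sup, MeasurableSpace.comap_comp, MeasurableSpace.comap_comp]
  rfl

lemma integrable_of_bdd {Ω : Type*} [MeasurableSpace Ω] {μ : Measure Ω} [IsFiniteMeasure μ]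
    {f : Ω → ℝ} (hf : AEStronglyMeasurable f μ) (C : ℝ) (h : ∀ ω, ‖f ω‖ ≤ C) :
    Integrable f μ :=
  (integrable_const C).mono' hf (Filter.Eventually.of_forall h)

/-- Conditional independence of two sub-σ-algebras `m₁`, `m₂` given a third `m`,
stated as the a.s. factorization of conditional probabilities given `m`. -/
def CondIndepGiven {Ω : Type*} [MeasurableSpace Ω] (μ : Measure Ω)
    (m m₁ m₂ : MeasurableSpace Ω) : Prop :=
  ∀ s t : Set Ω, (MeasurableSet[m₁]) s → MeasurableSet[m₂] t →
    μ[(s ∩ t).indicator (fun _ => (1 : ℝ)) | m] =ᵐ[μ]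
      fun ω => ((μ[s.indicator (fun _ => (1 : ℝ)) | m]) ω) *
        ((μ[t.indicator (fun _ => (1 : ℝ)) | m]) ω)

theorem stmt19_aux
    {Ω 𝒲 : Type*} [mΩ : MeasurableSpace Ω] [MeasurableSpace 𝒲]
    (μ : Measure Ω) [IsProbabilityMeasure μ]
    (W : Ω → 𝒲) (A Δ Y : Ω → ℝ)
    (hWmeas : Measurable W) (hAmeas : Measurable A)
    (hΔmeas : Measurable Δ) (hYmeas : Measurable Y)
    (hΔ01 : ∀ ω, Δ ω = 0 ∨ Δ ω = 1) (hY01 : ∀ ω, Y ω ∈ Set.Icc (0 : ℝ) 1)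
    (v δ : ℝ) (hδ0 : 0 < δ) (hδ1 : δ < 1)
    (G₀ g₀ Q₀ Q₀ᵥ : Ω → ℝ) (Ψ₀ : ℝ)
    (hG₀ : G₀ = μ[Δ | MeasurableSpace.comap (fun ω => (A ω, W ω)) inferInstance])
    (hg₀ : g₀ = μ[fun ω => if v ≤ A ω then (1 : ℝ) else 0 |
      MeasurableSpace.comap W inferInstance])
    (hQ₀ : Q₀ = fun ω => ((μ[fun ω' => Y ω' * Δ ω' |
      MeasurableSpace.comap (fun ω => (A ω, W ω)) inferInstance]) ω) / G₀ ω)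
    (hQ₀ᵥ : Q₀ᵥ = fun ω =>
      ((μ[fun ω' => Q₀ ω' * (if v ≤ A ω' then (1 : ℝ) else 0) |
        MeasurableSpace.comap W inferInstance]) ω) / g₀ ω)
    (hΨ₀ : Ψ₀ = ∫ ω, Q₀ᵥ ω ∂μ)
    (hG₀pos : ∀ᵐ ω ∂μ, δ ≤ G₀ ω)
    (hg₀pos : ∀ᵐ ω ∂μ, δ ≤ g₀ ω)
    (hCI : @CondIndepGiven Ω mΩ μ (MeasurableSpace.comap W inferInstance)
      (MeasurableSpace.comap Δ inferInstance)
      (MeasurableSpace.comap (fun ω => (A ω, Y ω)) inferInstance))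
    (Gbar₀ : Ω → ℝ) (hGbar₀ : Gbar₀ = μ[Δ | MeasurableSpace.comap W inferInstance])
    (hGbar₀pos : ∀ᵐ ω ∂μ, δ ≤ Gbar₀ ω) :
    Ψ₀ = ∫ ω, ((μ[fun ω' => Y ω' * Δ ω' * (if v ≤ A ω' then (1 : ℝ) else 0) |
        MeasurableSpace.comap W inferInstance]) ω) /
      (Gbar₀ ω * g₀ ω) ∂μ := by
  -- basic σ-algebra facts
  have hm0le : MeasurableSpace.comap W inferInstance ≤ mΩ := hWmeas.comap_le
  have hm1le : MeasurableSpace.comap (fun ω => (A ω, W ω)) inferInstance ≤ mΩ :=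
    (hAmeas.prodMk hWmeas).comap_le
  have hm01 : MeasurableSpace.comap W inferInstance
      ≤ MeasurableSpace.comap (fun ω => (A ω, W ω)) inferInstance := by
    rw [comap_pair]; exact le_sup_right
  set ind : Ω → ℝ := fun ω => if v ≤ A ω then (1 : ℝ) else 0 with hind
  -- boundedness / integrability
  have hΔbd : ∀ ω, ‖Δ ω‖ ≤ 1 := by
    intro ω; rcases hΔ01 ω with h | h <;> simp [h]
  have hΔint : Integrable Δ μ := integrable_of_bdd hΔmeas.aestronglyMeasurable 1 hΔbd
  have hYΔmeas : Measurable fun ω => Y ω * Δ ω := hYmeas.mul hΔmeas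
  have hYΔbd : ∀ ω, ‖Y ω * Δ ω‖ ≤ 1 := by
    intro ω
    rw [norm_mul]
    have h1 := hY01 ω
    have h2 := hΔbd ω
    have h3 : ‖Y ω‖ ≤ 1 := by rw [Real.norm_eq_abs, abs_le]; exact ⟨by linarith [h1.1], h1.2⟩
    calc ‖Y ω‖ * ‖Δ ω‖ ≤ 1 * 1 := mul_le_mul h3 h2 (norm_nonneg _) zero_le_one
    _ = 1 := one_mul 1
  have hYΔint : Integrable (fun ω => Y ω * Δ ω) μ :=
    integrable_of_bdd hYΔmeas.aestronglyMeasurable 1 hYΔbd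
  have hindmeas : Measurable ind :=
    Measurable.ite (measurableSet_le measurable_const hAmeas) measurable_const measurable_const
  have hindbd : ∀ ω, ‖ind ω‖ ≤ 1 := by
    intro ω; by_cases h : v ≤ A ω <;> simp [hind, h]
  have hYΔindmeas : Measurable fun ω => Y ω * Δ ω * ind ω := hYΔmeas.mul hindmeas
  have hYΔindbd : ∀ ω, ‖Y ω * Δ ω * ind ω‖ ≤ 1 := by
    intro ω
    rw [norm_mul]
    calc ‖Y ω * Δ ω‖ * ‖ind ω‖ ≤ 1 * 1 :=
      mul_le_mul (hYΔbd ω) (hindbd ω) (norm_nonneg _) zero_le_one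
    _ = 1 := one_mul 1
  have hYΔindint : Integrable (fun ω => Y ω * Δ ω * ind ω) μ :=
    integrable_of_bdd hYΔindmeas.aestronglyMeasurable 1 hYΔindbd
  have hGbarSM : StronglyMeasurable[MeasurableSpace.comap W inferInstance] Gbar₀ :=
    hGbar₀ ▸ stronglyMeasurable_condExp
  have hGbarInt : Integrable Gbar₀ μ := hGbar₀ ▸ integrable_condExp
  -- Δ as an indicator
  set s : Set Ω := Δ ⁻¹' {1} with hs_def
  have hsmeas : MeasurableSet s := hΔmeas (measurableSet_singleton 1)
  have hΔindic : Δ = s.indicator (fun _ => (1 : ℝ)) := by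
    funext ω
    rcases hΔ01 ω with h | h
    · have hω : ω ∉ s := by simp [hs_def, h]
      simp [Set.indicator_of_notMem hω, h]
    · have hω : ω ∈ s := by simp [hs_def, h]
      simp [Set.indicator_of_mem hω, h]
  have hsΔ : MeasurableSet[MeasurableSpace.comap Δ inferInstance] s :=
    ⟨{1}, measurableSet_singleton 1, rfl⟩
  -- Fact A: Gbar₀ is a version of μ[Δ | m1]
  have keyIntegral : ∀ S : Set Ω,
      MeasurableSet[MeasurableSpace.comap (fun ω => (A ω, W ω)) inferInstance] S →
      ∫ x in S, Gbar₀ x ∂μ = ∫ x in S, Δ x ∂μ := by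
    intro S hS
    have h_eq : MeasurableSpace.comap (fun ω => (A ω, W ω)) inferInstance
        = MeasurableSpace.generateFrom
        {u : Set Ω | ∃ E : Set ℝ, MeasurableSet E ∧ ∃ F : Set 𝒲, MeasurableSet F ∧
          u = A ⁻¹' E ∩ W ⁻¹' F} := by
      apply le_antisymm
      · rw [comap_pair]
        apply sup_le
        · intro u hu
          obtain ⟨E, hE, rfl⟩ := hu
          have h : A ⁻¹' E = A ⁻¹' E ∩ W ⁻¹' Set.univ := by simp
          rw [h]
          exact MeasurableSpace.measurableSet_generateFrom
            ⟨E, hE, Set.univ, MeasurableSet.univ, rfl⟩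
        · intro u hu
          obtain ⟨F, hF, rfl⟩ := hu
          have h : W ⁻¹' F = A ⁻¹' Set.univ ∩ W ⁻¹' F := by simp
          rw [h]
          exact MeasurableSpace.measurableSet_generateFrom
            ⟨Set.univ, MeasurableSet.univ, F, hF, rfl⟩
      · apply MeasurableSpace.generateFrom_le
        rintro u ⟨E, hE, F, hF, rfl⟩
        have h1 : MeasurableSet[MeasurableSpace.comap (fun ω => (A ω, W ω)) inferInstance]
            (A ⁻¹' E) := by
          rw [comap_pair]
          exact (le_sup_left : MeasurableSpace.comap A inferInstance ≤ _) _ ⟨E, hE, rfl⟩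
        have h2 : MeasurableSet[MeasurableSpace.comap (fun ω => (A ω, W ω)) inferInstance]
            (W ⁻¹' F) := by
          rw [comap_pair]
          exact (le_sup_right : MeasurableSpace.comap W inferInstance ≤ _) _ ⟨F, hF, rfl⟩
        exact h1.inter h2
    have h_pi : IsPiSystem {u : Set Ω | ∃ E : Set ℝ, MeasurableSet E ∧ ∃ F : Set 𝒲,
        MeasurableSet F ∧ u = A ⁻¹' E ∩ W ⁻¹' F} := by
      rintro u ⟨E, hE, F, hF, rfl⟩ u' ⟨E', hE', F', hF', rfl⟩ -
      refine ⟨E ∩ E', hE.inter hE', F ∩ F', hF.inter hF', ?_⟩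
      ext ω; simp only [Set.mem_inter_iff, Set.mem_preimage]; tauto
    refine MeasurableSpace.induction_on_inter
      (m := MeasurableSpace.comap (fun ω => (A ω, W ω)) inferInstance)
      (C := fun S _ => ∫ x in S, Gbar₀ x ∂μ = ∫ x in S, Δ x ∂μ) h_eq h_pi ?_ ?_ ?_ ?_ S hS
    · simp
    · -- basic case
      rintro u ⟨E, hE, F, hF, rfl⟩
      set C : Set Ω := A ⁻¹' E with hC_def
      set B : Set Ω := W ⁻¹' F with hB_def
      have hCmeas : MeasurableSet C := hAmeas hE
      have hBm0 : MeasurableSet[MeasurableSpace.comap W inferInstance] B := ⟨F, hF, rfl⟩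
      have hCAY : MeasurableSet[MeasurableSpace.comap (fun ω => (A ω, Y ω)) inferInstance] C := by
        refine ⟨E ×ˢ Set.univ, hE.prod MeasurableSet.univ, ?_⟩
        ext ω; simp [hC_def]
      have hCindint : Integrable (C.indicator fun _ => (1 : ℝ)) μ :=
        (integrable_const 1).indicator hCmeas
      have hsCindint : Integrable ((s ∩ C).indicator fun _ => (1 : ℝ)) μ :=
        (integrable_const 1).indicator (hsmeas.inter hCmeas)
      have hGCint : Integrable (Gbar₀ * (C.indicator fun _ => (1 : ℝ))) μ := by
        have h := Integrable.bdd_mul (c := 1) hGbarInt hCindint.aestronglyMeasurable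
          (Filter.Eventually.of_forall fun x => by by_cases hx : x ∈ C <;> simp [Set.indicator, hx])
        exact h.congr (Filter.Eventually.of_forall fun x => mul_comm _ _)
      -- pull-out property at level m0
      have hpull : μ[Gbar₀ * (C.indicator fun _ => (1 : ℝ)) |
            MeasurableSpace.comap W inferInstance]
          =ᵐ[μ] Gbar₀ * μ[C.indicator fun _ => (1 : ℝ) | MeasurableSpace.comap W inferInstance] :=
        condExp_mul_of_stronglyMeasurable_left hGbarSM hGCint hCindint
      -- conditional independence
      have hCIapp := hCI s C hsΔ hCAY
      -- μ[1_s | m0] = Gbar₀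
      have hsG : μ[s.indicator fun _ => (1 : ℝ) | MeasurableSpace.comap W inferInstance]
          = Gbar₀ := by rw [hGbar₀, hΔindic]
      -- LHS computation
      have hL : ∫ x in C ∩ B, Gbar₀ x ∂μ
          = ∫ x in B, (Gbar₀ * (C.indicator fun _ => (1 : ℝ))) x ∂μ := by
        rw [Set.inter_comm, ← setIntegral_indicator hCmeas]
        refine setIntegral_congr_fun (hm0le _ hBm0) (fun x _ => ?_)
        by_cases hx : x ∈ C
        · simp [Set.indicator_of_mem hx]
        · simp [Set.indicator_of_notMem hx]
      have hR : ∫ x in C ∩ B, Δ x ∂μ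
          = ∫ x in B, ((s ∩ C).indicator fun _ => (1 : ℝ)) x ∂μ := by
        rw [Set.inter_comm, ← setIntegral_indicator hCmeas]
        refine setIntegral_congr_fun (hm0le _ hBm0) (fun x _ => ?_)
        by_cases hx : x ∈ C
        · by_cases hxs : x ∈ s
          · simp [Set.indicator_of_mem hx, Set.indicator_of_mem (Set.mem_inter hxs hx), hΔindic,
              Set.indicator_of_mem hxs]
          · have : x ∉ s ∩ C := fun hmem => hxs hmem.1
            simp [Set.indicator_of_mem hx, Set.indicator_of_notMem this, hΔindic,
              Set.indicator_of_notMem hxs]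
        · have : x ∉ s ∩ C := fun hmem => hx hmem.2
          simp [Set.indicator_of_notMem hx, Set.indicator_of_notMem this]
      rw [hL, hR,
        ← setIntegral_condExp hm0le hGCint hBm0,
        ← setIntegral_condExp hm0le hsCindint hBm0]
      refine setIntegral_congr_ae (hm0le _ hBm0) ?_
      filter_upwards [hpull, hCIapp] with x hx1 hx2 using fun _ => by
        rw [hx2, hsG, hx1]; rfl
    · -- complement
      intro t htm1 ht
      have htmeas : MeasurableSet t := hm1le _ htm1
      have h1 := integral_add_compl htmeas hGbarInt
      have h2 := integral_add_compl htmeas hΔint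
      have h3 : ∫ x, Gbar₀ x ∂μ = ∫ x, Δ x ∂μ := by
        rw [hGbar₀]; exact integral_condExp hm0le
      linarith
    · -- disjoint union
      intro f hdisj hfm1 hf
      have hfmeas : ∀ i, MeasurableSet (f i) := fun i => hm1le _ (hfm1 i)
      rw [integral_iUnion hfmeas hdisj hGbarInt.integrableOn,
        integral_iUnion hfmeas hdisj hΔint.integrableOn]
      exact tsum_congr hf
  have hGver : Gbar₀ =ᵐ[μ] μ[Δ | MeasurableSpace.comap (fun ω => (A ω, W ω)) inferInstance] :=
    ae_eq_condExp_of_forall_setIntegral_eq hm1le hΔint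
      (fun S _ _ => hGbarInt.integrableOn)
      (fun S hS _ => keyIntegral S hS)
      (StronglyMeasurable.aestronglyMeasurable (hGbarSM.mono hm01))
  have hG₀eq : G₀ =ᵐ[μ] Gbar₀ := by rw [hG₀]; exact hGver.symm
  -- pull-out of the indicator at level m1
  have hAm1 : Measurable[MeasurableSpace.comap (fun ω => (A ω, W ω)) inferInstance] A := by
    rw [comap_pair]; exact Measurable.of_comap_le le_sup_left
  have hindm1 : StronglyMeasurable[MeasurableSpace.comap (fun ω => (A ω, W ω)) inferInstance]
      ind := by
    refine Measurable.stronglyMeasurable ?_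
    exact Measurable.ite (measurableSet_le measurable_const hAm1)
      measurable_const measurable_const
  have hindYΔint : Integrable (ind * fun ω => Y ω * Δ ω) μ :=
    hYΔindint.congr (Filter.Eventually.of_forall fun x => (mul_comm _ _))
  have h2 : μ[fun ω => Y ω * Δ ω * ind ω |
        MeasurableSpace.comap (fun ω => (A ω, W ω)) inferInstance]
      =ᵐ[μ] fun ω => ind ω * (μ[fun ω' => Y ω' * Δ ω' |
        MeasurableSpace.comap (fun ω => (A ω, W ω)) inferInstance]) ω := by
    have hfe : (fun ω => Y ω * Δ ω * ind ω) = ind * fun ω => Y ω * Δ ω :=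
      funext fun ω => mul_comm _ _
    rw [hfe]
    exact condExp_mul_of_stronglyMeasurable_left hindm1 hindYΔint hYΔint
  have h3 : μ[μ[fun ω => Y ω * Δ ω * ind ω |
        MeasurableSpace.comap (fun ω => (A ω, W ω)) inferInstance] |
        MeasurableSpace.comap W inferInstance]
      =ᵐ[μ] μ[fun ω => Y ω * Δ ω * ind ω | MeasurableSpace.comap W inferInstance] :=
    condExp_condExp_of_le hm01 hm1le
  have h4 : (fun ω => Q₀ ω * ind ω) =ᵐ[μ] fun ω => (Gbar₀ ω)⁻¹ *
      (μ[fun ω => Y ω * Δ ω * ind ω |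
        MeasurableSpace.comap (fun ω => (A ω, W ω)) inferInstance]) ω := by
    filter_upwards [hG₀eq, h2] with ω hω1 hω2
    rw [hQ₀]
    simp only
    rw [hω2, hω1, div_eq_mul_inv]
    ring
  have hint1 : Integrable ((fun ω => (Gbar₀ ω)⁻¹) * μ[fun ω => Y ω * Δ ω * ind ω |
      MeasurableSpace.comap (fun ω => (A ω, W ω)) inferInstance]) μ := by
    refine Integrable.bdd_mul (c := δ⁻¹) integrable_condExp
      ((hGbarSM.measurable.inv.stronglyMeasurable.mono hm0le).aestronglyMeasurable) ?_
    filter_upwards [hGbar₀pos] with ω hω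
    rw [norm_inv, Real.norm_eq_abs, abs_of_pos (lt_of_lt_of_le hδ0 hω)]
    exact inv_anti₀ hδ0 hω
  have hb : μ[(fun ω => (Gbar₀ ω)⁻¹) * μ[fun ω => Y ω * Δ ω * ind ω |
        MeasurableSpace.comap (fun ω => (A ω, W ω)) inferInstance] |
        MeasurableSpace.comap W inferInstance]
      =ᵐ[μ] (fun ω => (Gbar₀ ω)⁻¹) * μ[μ[fun ω => Y ω * Δ ω * ind ω |
        MeasurableSpace.comap (fun ω => (A ω, W ω)) inferInstance] |
        MeasurableSpace.comap W inferInstance] :=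
    condExp_mul_of_stronglyMeasurable_left hGbarSM.measurable.inv.stronglyMeasurable hint1 integrable_condExp
  have h5 : μ[fun ω => Q₀ ω * ind ω | MeasurableSpace.comap W inferInstance]
      =ᵐ[μ] fun ω => (Gbar₀ ω)⁻¹ * (μ[fun ω => Y ω * Δ ω * ind ω |
        MeasurableSpace.comap W inferInstance]) ω := by
    have ha := condExp_congr_ae (m := MeasurableSpace.comap W inferInstance) h4
    filter_upwards [ha, hb, h3] with ω e1 e2 e3
    rw [e1]
    have : (fun ω => (Gbar₀ ω)⁻¹ * (μ[fun ω => Y ω * Δ ω * ind ω |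
        MeasurableSpace.comap (fun ω => (A ω, W ω)) inferInstance]) ω)
        = (fun ω => (Gbar₀ ω)⁻¹) * μ[fun ω => Y ω * Δ ω * ind ω |
        MeasurableSpace.comap (fun ω => (A ω, W ω)) inferInstance] := rfl
    rw [this, e2]
    simp only [Pi.mul_apply]
    rw [e3]
  have h6 : Q₀ᵥ =ᵐ[μ] fun ω => ((μ[fun ω => Y ω * Δ ω * ind ω |
      MeasurableSpace.comap W inferInstance]) ω) / (Gbar₀ ω * g₀ ω) := by
    filter_upwards [h5] with ω hω
    rw [hQ₀ᵥ]
    simp only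
    rw [hω, div_eq_mul_inv, div_eq_mul_inv, mul_inv]
    ring
  rw [hΨ₀]
  exact integral_congr_ae h6

/-- under quasi-informative missingness (`σ(Δ) ⟂ σ(A, Y) ∣ 𝒢₀`), the
threshold-response reduces to the binary-treatment-specific-mean form
`Ψ₀ = E[ E[Y·Δ·1{A ≥ v} ∣ 𝒢₀] / (Ḡ₀·g₀) ]`. -/
theorem stmt19
    {Ω 𝒲 : Type*} [mΩ : MeasurableSpace Ω] [MeasurableSpace 𝒲]
    (μ : Measure Ω) [IsProbabilityMeasure μ]
    (W : Ω → 𝒲) (A Δ Y : Ω → ℝ)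
    (hWmeas : Measurable W) (hAmeas : Measurable A)
    (hΔmeas : Measurable Δ) (hYmeas : Measurable Y)
    (hΔ01 : ∀ ω, Δ ω = 0 ∨ Δ ω = 1) (hY01 : ∀ ω, Y ω ∈ Set.Icc (0 : ℝ) 1)
    (v δ : ℝ) (hδ0 : 0 < δ) (hδ1 : δ < 1)
    (m0 m1 m2 : MeasurableSpace Ω)
    (hm0 : m0 = MeasurableSpace.comap W inferInstance)
    (hm1 : m1 = MeasurableSpace.comap (fun ω => (A ω, W ω)) inferInstance)
    (hm2 : m2 = MeasurableSpace.comap (fun ω => (A ω, W ω, Δ ω)) inferInstance)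
    (G₀ g₀ Q₀ Q₀ᵥ : Ω → ℝ) (Ψ₀ : ℝ)
    (hG₀ : G₀ = μ[Δ | m1])
    (hg₀ : g₀ = μ[fun ω => if v ≤ A ω then (1 : ℝ) else 0 | m0])
    (hQ₀ : Q₀ = fun ω => ((μ[fun ω' => Y ω' * Δ ω' | m1]) ω) / G₀ ω)
    (hQ₀ᵥ : Q₀ᵥ = fun ω =>
      ((μ[fun ω' => Q₀ ω' * (if v ≤ A ω' then (1 : ℝ) else 0) | m0]) ω) / g₀ ω)
    (hΨ₀ : Ψ₀ = ∫ ω, Q₀ᵥ ω ∂μ)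
    (hG₀pos : ∀ᵐ ω ∂μ, δ ≤ G₀ ω)
    (hg₀pos : ∀ᵐ ω ∂μ, δ ≤ g₀ ω)
    (hCI : @CondIndepGiven Ω mΩ μ m0 (MeasurableSpace.comap Δ inferInstance)
      (MeasurableSpace.comap (fun ω => (A ω, Y ω)) inferInstance))
    (Gbar₀ : Ω → ℝ) (hGbar₀ : Gbar₀ = μ[Δ | m0])
    (hGbar₀pos : ∀ᵐ ω ∂μ, δ ≤ Gbar₀ ω) :
    Ψ₀ = ∫ ω, ((μ[fun ω' => Y ω' * Δ ω' * (if v ≤ A ω' then (1 : ℝ) else 0) | m0]) ω) /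
      (Gbar₀ ω * g₀ ω) ∂μ := by
  subst hm0 hm1 hm2
  exact stmt19_aux μ W A Δ Y hWmeas hAmeas hΔmeas hYmeas hΔ01 hY01 v δ hδ0 hδ1
    G₀ g₀ Q₀ Q₀ᵥ Ψ₀ hG₀ hg₀ hQ₀ hQ₀ᵥ hΨ₀ hG₀pos hg₀pos hCI Gbar₀ hGbar₀ hGbar₀pos
end
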